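/- Fix β > 0 and for n ≥ 1 set x_n = −e·n − β·n^{1/3} and z_n = n/x_n. Then for every n ≥ 1 one has −e^{−1} < z_n < 0, and with LW₀(z_n) denoting the unique w ∈ (−1, 0) satisfying w·exp(w) = z_n, the limit n^{1/3}·(LW₀(z_n) + 1) → √(2β/e) holds as n → ∞. -/

import Mathlib

open Real Filter Set

noncomputable def LW0neg (z : ℝ) : ℝ :=
  Function.invFunOn (fun w => w * Real.exp w) (Set.Ioo (-1) 0) z

lemma g_mono : StrictMonoOn (fun w : ℝ => w * Real.exp w) (Set.Icc (-1) 0) := by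
  apply strictMonoOn_of_deriv_pos (convex_Icc _ _)
  · fun_prop
  · intro w hw
    rw [interior_Icc] at hw
    have : HasDerivAt (fun w : ℝ => w * Real.exp w) (1 * Real.exp w + w * Real.exp w) w :=
      (hasDerivAt_id w).mul (Real.hasDerivAt_exp w)
    rw [this.deriv]
    nlinarith [Real.exp_pos w, hw.1]

lemma exists_w {z : ℝ} (hz : z ∈ Set.Ioo (-Real.exp (-1)) 0) :
    ∃ w ∈ Set.Ioo (-1 : ℝ) 0, w * Real.exp w = z := by
  have hcont : ContinuousOn (fun w : ℝ => w * Real.exp w) (Set.Icc (-1) 0) := by fun_prop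
  have := intermediate_value_Ioo (by norm_num : (-1:ℝ) ≤ 0) hcont
  simp only [Real.exp_zero, mul_one, zero_mul] at this
  have hz' : z ∈ Set.Ioo ((-1 : ℝ) * Real.exp (-1)) 0 := by
    simpa [neg_mul, one_mul] using hz
  obtain ⟨w, hw, hwz⟩ := this hz'
  exact ⟨w, hw, hwz⟩

lemma LW0neg_spec {z : ℝ} (hz : ∃ w ∈ Set.Ioo (-1 : ℝ) 0, w * Real.exp w = z) :
    LW0neg z ∈ Set.Ioo (-1 : ℝ) 0 ∧ LW0neg z * Real.exp (LW0neg z) = z := by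
  obtain ⟨w, hw, hwz⟩ := hz
  refine ⟨Function.invFunOn_mem ⟨w, hw, hwz⟩, ?_⟩
  exact Function.invFunOn_eq (f := fun w => w * Real.exp w) ⟨w, hw, hwz⟩

lemma f_lower {t : ℝ} (ht : 0 ≤ t) : t ^ 2 / 2 ≤ 1 + (t - 1) * Real.exp t := by
  have key : MonotoneOn (fun t : ℝ => 1 + (t - 1) * Real.exp t - t ^ 2 / 2) (Set.Ici 0) := by
    apply monotoneOn_of_deriv_nonneg (convex_Ici _)
    · fun_prop
    · apply Differentiable.differentiableOn; fun_prop
    · intro s hs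
      rw [interior_Ici] at hs
      have h1 : HasDerivAt (fun t : ℝ => 1 + (t - 1) * Real.exp t - t ^ 2 / 2)
          ((1 * Real.exp s + (s - 1) * Real.exp s) - 2 * s ^ 1 / 2) s := by
        have := (((hasDerivAt_id s).sub_const 1).mul (Real.hasDerivAt_exp s)).const_add 1
        have h2 := ((hasDerivAt_pow 2 s).div_const 2)
        exact (this.sub h2).congr_deriv (by norm_num)
      rw [h1.deriv]
      have := Real.add_one_le_exp s
      nlinarith [Real.exp_pos s, (Set.mem_Ioi.mp hs).le]
  have := key (Set.self_mem_Ici) (Set.mem_Ici.mpr ht) ht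
  simp at this
  linarith

lemma f_upper {t : ℝ} (ht : 0 ≤ t) : 1 + (t - 1) * Real.exp t ≤ t ^ 2 / 2 * Real.exp t := by
  have key : MonotoneOn (fun t : ℝ => t ^ 2 / 2 * Real.exp t - (1 + (t - 1) * Real.exp t)) (Set.Ici 0) := by
    apply monotoneOn_of_deriv_nonneg (convex_Ici _)
    · fun_prop
    · apply Differentiable.differentiableOn; fun_prop
    · intro s hs
      rw [interior_Ici] at hs
      have h1 : HasDerivAt (fun t : ℝ => t ^ 2 / 2 * Real.exp t - (1 + (t - 1) * Real.exp t))
          ((2 * s ^ 1 / 2 * Real.exp s + s ^ 2 / 2 * Real.exp s) -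
            (1 * Real.exp s + (s - 1) * Real.exp s)) s := by
        have ha := ((hasDerivAt_pow 2 s).div_const 2).mul (Real.hasDerivAt_exp s)
        have hb := (((hasDerivAt_id s).sub_const 1).mul (Real.hasDerivAt_exp s)).const_add 1
        exact (ha.sub hb).congr_deriv (by norm_num)
      rw [h1.deriv]
      nlinarith [Real.exp_pos s, (Set.mem_Ioi.mp hs).le]
  have := key (Set.self_mem_Ici) (Set.mem_Ici.mpr ht) ht
  simp at this
  linarith

lemma zmem {β N : ℝ} (hβ : 0 < β) (hN : 1 ≤ N) :
    N / (-(Real.exp 1 * N) - β * N ^ ((1 : ℝ) / 3)) ∈ Set.Ioo (-Real.exp (-1)) 0 := by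
  have hN0 : (0:ℝ) < N := lt_of_lt_of_le one_pos hN
  have hc : 0 < N ^ ((1:ℝ)/3) := Real.rpow_pos_of_pos hN0 _
  have hD : 0 < Real.exp 1 * N + β * N ^ ((1:ℝ)/3) := by positivity
  have hz_eq : N / (-(Real.exp 1 * N) - β * N ^ ((1:ℝ)/3)) =
      -(N / (Real.exp 1 * N + β * N ^ ((1:ℝ)/3))) := by
    rw [show -(Real.exp 1 * N) - β * N ^ ((1:ℝ)/3) = -(Real.exp 1 * N + β * N ^ ((1:ℝ)/3)) by ring,
      div_neg]
  constructor
  · rw [hz_eq, Real.exp_neg, neg_lt_neg_iff, div_lt_iff₀ hD]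
    have := Real.exp_pos 1
    rw [inv_mul_eq_div, lt_div_iff₀ this]
    nlinarith
  · rw [hz_eq, neg_lt_zero]
    exact div_pos hN0 hD

set_option maxHeartbeats 1000000 in
lemma key_core {β N w : ℝ} (hβ : 0 < β) (hN : 1 ≤ N) (hw1 : -1 < w) (hw0 : w < 0)
    (hwe : w * Real.exp w = N / (-(Real.exp 1 * N) - β * N ^ ((1 : ℝ) / 3))) :
    Real.sqrt (2 * (β / (Real.exp 1 + β * N ^ (-((2:ℝ)/3)))) *
        Real.exp (-Real.sqrt (2 * (β * N ^ (-((2:ℝ)/3)) / (Real.exp 1 + β * N ^ (-((2:ℝ)/3))))))) ≤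
      N ^ ((1:ℝ)/3) * (w + 1) ∧
    N ^ ((1:ℝ)/3) * (w + 1) ≤
      Real.sqrt (2 * (β / (Real.exp 1 + β * N ^ (-((2:ℝ)/3))))) := by
  have hN0 : (0:ℝ) < N := lt_of_lt_of_le one_pos hN
  set c := N ^ ((1:ℝ)/3) with hc_def
  set u := N ^ (-((2:ℝ)/3)) with hu_def
  have hc : 0 < c := Real.rpow_pos_of_pos hN0 _
  have hu : 0 < u := Real.rpow_pos_of_pos hN0 _
  have hD : 0 < Real.exp 1 * N + β * c := by positivity
  have he : 0 < Real.exp 1 + β * u := by positivity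
  have hz_eq : N / (-(Real.exp 1 * N) - β * c) = -(N / (Real.exp 1 * N + β * c)) := by
    rw [show -(Real.exp 1 * N) - β * c = -(Real.exp 1 * N + β * c) by ring, div_neg]
  set t := w + 1 with ht_def
  have ht0 : 0 < t := by rw [ht_def]; linarith
  have huc : u * N = c := by
    rw [hu_def, hc_def, show ((1:ℝ)/3) = -((2:ℝ)/3) + 1 by norm_num,
      Real.rpow_add hN0, Real.rpow_one]
  have hc3 : c ^ 3 = N := by
    rw [hc_def, ← Real.rpow_natCast (N ^ ((1:ℝ)/3)) 3, ← Real.rpow_mul hN0.le]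
    norm_num
  set δ := β * u / (Real.exp 1 + β * u) with hδ_def
  have hδpos : 0 < δ := by positivity
  have hDfac : Real.exp 1 * N + β * c = (Real.exp 1 + β * u) * N := by
    rw [← huc]; ring
  have hδc : δ * c ^ 2 = β / (Real.exp 1 + β * u) := by
    rw [hδ_def, div_mul_eq_mul_div, div_eq_div_iff he.ne' he.ne']
    have h3 : u * c ^ 3 = c := by rw [hc3]; exact huc
    have huc2 : u * c ^ 2 = 1 := by
      have : u * c ^ 2 * c = 1 * c := by linear_combination h3
      exact mul_right_cancel₀ hc.ne' this
    linear_combination β * (Real.exp 1 + β * u) * huc2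
  have hfδ : 1 + (t - 1) * Real.exp t = δ := by
    have hte : Real.exp t = Real.exp w * Real.exp 1 := by rw [ht_def, Real.exp_add]
    have h1 : 1 + (t - 1) * Real.exp t = 1 + (w * Real.exp w) * Real.exp 1 := by
      rw [hte, show t - 1 = w by rw [ht_def]; ring]; ring
    rw [h1, hwe, hz_eq, hδ_def, hDfac]
    field_simp
    ring
  have hlow1 : t ^ 2 / 2 ≤ δ := hfδ ▸ f_lower ht0.le
  have hup1 : δ ≤ t ^ 2 / 2 * Real.exp t := hfδ ▸ f_upper ht0.le
  clear_value c u t δ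
  have ht_le : t ≤ Real.sqrt (2 * δ) := by
    nlinarith [Real.sq_sqrt (show (0:ℝ) ≤ 2 * δ by positivity), Real.sqrt_nonneg (2 * δ)]
  have hexp : Real.exp (-Real.sqrt (2 * δ)) ≤ Real.exp (-t) := Real.exp_le_exp.mpr (by linarith)
  have s1 : 2 * δ * Real.exp (-Real.sqrt (2 * δ)) ≤ 2 * δ * Real.exp (-t) :=
    mul_le_mul_of_nonneg_left hexp (by positivity)
  have s2 : 2 * δ * Real.exp (-t) ≤ t ^ 2 := by
    have hmul : Real.exp (-t) * Real.exp t = 1 := by rw [← Real.exp_add]; simp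
    nlinarith [mul_le_mul_of_nonneg_right hup1 (Real.exp_pos (-t)).le, Real.exp_pos (-t)]
  have hlow2 : 2 * δ * Real.exp (-Real.sqrt (2 * δ)) ≤ t ^ 2 := le_trans s1 s2
  have hct : 0 ≤ c * t := mul_nonneg hc.le ht0.le
  constructor
  · rw [← hδc]
    have hb : 2 * (δ * c ^ 2) * Real.exp (-Real.sqrt (2 * δ)) ≤ (c * t) ^ 2 := by
      nlinarith [mul_le_mul_of_nonneg_left hlow2 (sq_nonneg c)]
    calc Real.sqrt (2 * (δ * c ^ 2) * Real.exp (-Real.sqrt (2 * δ)))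
        ≤ Real.sqrt ((c * t) ^ 2) := Real.sqrt_le_sqrt hb
      _ = c * t := Real.sqrt_sq hct
  · rw [← hδc]
    have hb : (c * t) ^ 2 ≤ 2 * (δ * c ^ 2) := by
      nlinarith [mul_le_mul_of_nonneg_left hlow1 (sq_nonneg c)]
    exact le_trans (le_of_eq (Real.sqrt_sq hct).symm) (Real.sqrt_le_sqrt hb)

lemma key_bounds {β N : ℝ} (hβ : 0 < β) (hN : 1 ≤ N) :
    Real.sqrt (2 * (β / (Real.exp 1 + β * N ^ (-((2:ℝ)/3)))) *
        Real.exp (-Real.sqrt (2 * (β * N ^ (-((2:ℝ)/3)) / (Real.exp 1 + β * N ^ (-((2:ℝ)/3))))))) ≤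
      N ^ ((1:ℝ)/3) * (LW0neg (N / (-(Real.exp 1 * N) - β * N ^ ((1 : ℝ) / 3))) + 1) ∧
    N ^ ((1:ℝ)/3) * (LW0neg (N / (-(Real.exp 1 * N) - β * N ^ ((1 : ℝ) / 3))) + 1) ≤
      Real.sqrt (2 * (β / (Real.exp 1 + β * N ^ (-((2:ℝ)/3))))) := by
  obtain ⟨⟨h1, h2⟩, he⟩ := LW0neg_spec (exists_w (zmem hβ hN))
  exact key_core hβ hN h1 h2 he

/-- For fixed `β > 0`, with `xₙ = −e·n − β·n^{1/3}` and `zₙ = n/xₙ`, one has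
`−e⁻¹ < zₙ < 0` for all `n ≥ 1`, and `n^{1/3}·(LW₀(zₙ) + 1) → √(2β/e)` as `n → ∞`. -/
theorem lambertW_transition_region (β : ℝ) (hβ : 0 < β) :
    (∀ n : ℕ, 1 ≤ n →
      -Real.exp (-1) <
        (n : ℝ) / (-(Real.exp 1 * n) - β * (n : ℝ) ^ ((1 : ℝ) / 3)) ∧
      (n : ℝ) / (-(Real.exp 1 * n) - β * (n : ℝ) ^ ((1 : ℝ) / 3)) < 0) ∧
    Filter.Tendsto (fun n : ℕ =>
        (n : ℝ) ^ ((1 : ℝ) / 3) *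
          (LW0neg ((n : ℝ) / (-(Real.exp 1 * n) - β * (n : ℝ) ^ ((1 : ℝ) / 3))) + 1))
      Filter.atTop (nhds (Real.sqrt (2 * β / Real.exp 1))) := by
  constructor
  · intro n hn
    have h := zmem hβ (show (1:ℝ) ≤ (n:ℝ) from by exact_mod_cast hn)
    exact ⟨h.1, h.2⟩
  · have hu : Tendsto (fun n : ℕ => (n:ℝ) ^ (-((2:ℝ)/3))) atTop (nhds 0) :=
      (tendsto_rpow_neg_atTop (by norm_num)).comp tendsto_natCast_atTop_atTop
    have hden : Tendsto (fun n : ℕ => Real.exp 1 + β * (n:ℝ) ^ (-((2:ℝ)/3))) atTop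
        (nhds (Real.exp 1)) := by
      have := (tendsto_const_nhds (x := Real.exp 1)).add ((tendsto_const_nhds (x := β)).mul hu)
      simpa using this
    have hne : Real.exp 1 ≠ 0 := (Real.exp_pos 1).ne'
    have hA : Tendsto (fun n : ℕ => β / (Real.exp 1 + β * (n:ℝ) ^ (-((2:ℝ)/3)))) atTop
        (nhds (β / Real.exp 1)) := tendsto_const_nhds.div hden hne
    have hB : Tendsto (fun n : ℕ =>
        β * (n:ℝ) ^ (-((2:ℝ)/3)) / (Real.exp 1 + β * (n:ℝ) ^ (-((2:ℝ)/3)))) atTop (nhds 0) := by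
      have := ((tendsto_const_nhds (x := β)).mul hu).div hden hne
      rw [mul_zero, zero_div] at this; exact this
    have hupper : Tendsto (fun n : ℕ =>
        Real.sqrt (2 * (β / (Real.exp 1 + β * (n:ℝ) ^ (-((2:ℝ)/3)))))) atTop
        (nhds (Real.sqrt (2 * β / Real.exp 1))) := by
      have := ((tendsto_const_nhds (x := (2:ℝ))).mul hA).sqrt
      simpa [mul_div_assoc] using this
    have hlower : Tendsto (fun n : ℕ =>
        Real.sqrt (2 * (β / (Real.exp 1 + β * (n:ℝ) ^ (-((2:ℝ)/3)))) *
          Real.exp (-Real.sqrt (2 * (β * (n:ℝ) ^ (-((2:ℝ)/3)) /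
            (Real.exp 1 + β * (n:ℝ) ^ (-((2:ℝ)/3)))))))) atTop
        (nhds (Real.sqrt (2 * β / Real.exp 1))) := by
      have h1 := (Real.continuous_exp.tendsto _).comp
        ((tendsto_const_nhds (x := (2:ℝ))).mul hB).sqrt.neg
      have h3 := (((tendsto_const_nhds (x := (2:ℝ))).mul hA).mul h1).sqrt
      simpa [Function.comp, mul_div_assoc] using h3
    apply tendsto_of_tendsto_of_tendsto_of_le_of_le' hlower hupper
    · filter_upwards [eventually_ge_atTop 1] with n hn
      exact (key_bounds hβ (by exact_mod_cast hn : (1:ℝ) ≤ (n:ℝ))).1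
    · filter_upwards [eventually_ge_atTop 1] with n hn
      exact (key_bounds hβ (by exact_mod_cast hn : (1:ℝ) ≤ (n:ℝ))).2
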